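/- arXiv:2002.02905 — 3 statements merged into one kernel-verified Lean document; each statement's English description precedes it below -/
import Mathlib

section
/- Let H = ℓ²(ℕ*) and let A be the diagonal operator with Ae_n = e_n/n!. Then the backward shift T (Te_1 = 0, Te_n = e_{n-1} for n ≥ 2) is bounded but not A-bounded; i.e., there is no λ > 0 with ‖A^{1/2}Tx‖ ≤ λ‖A^{1/2}x‖ for all x. -/
open ContinuousLinearMap

variable {H : Type*} [NormedAddCommGroup H] [InnerProductSpace ℂ H] [CompleteSpace H]

/-- The seminorm `‖x‖_A = ‖A^{1/2} x‖ = √⟨Ax, x⟩` induced by a positive operator `A`. -/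
noncomputable def anorm (A : H →L[ℂ] H) (x : H) : ℝ :=
  Real.sqrt (A.reApplyInnerSelf x)

/-- `T` is `A`-bounded: `‖Tx‖_A ≤ c ‖x‖_A` for some `c > 0`. -/
def ABounded (A T : H →L[ℂ] H) : Prop :=
  ∃ c : ℝ, 0 < c ∧ ∀ x : H, anorm A (T x) ≤ c * anorm A x

/-- The operator seminorm `‖T‖_A`: the least `c ≥ 0` with `‖Tx‖_A ≤ c ‖x‖_A` for all `x`. -/
noncomputable def aNorm (A T : H →L[ℂ] H) : ℝ :=
  sInf {c : ℝ | 0 ≤ c ∧ ∀ x : H, anorm A (T x) ≤ c * anorm A x}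

/-- The `A`-spectral radius `r_A(T) = inf_{n ≥ 1} ‖T^n‖_A^{1/n}`. -/
noncomputable def aSpecRad (A T : H →L[ℂ] H) : ℝ :=
  ⨅ n : ℕ+, aNorm A (T ^ (n : ℕ)) ^ ((n : ℝ)⁻¹)

/-- The `A`-numerical radius `ω_A(T) = sup {|⟨ATx, x⟩| : ‖x‖_A = 1}`. -/
noncomputable def aNumRad (A T : H →L[ℂ] H) : ℝ :=
  sSup {c : ℝ | ∃ x : H, anorm A x = 1 ∧ c = ‖(inner ℂ (A (T x)) x : ℂ)‖}

instance : Fact ((1 : ENNReal) ≤ 2) := ⟨one_le_two⟩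

lemma anorm_single (A : lp (fun _ : ℕ => ℂ) 2 →L[ℂ] lp (fun _ : ℕ => ℂ) 2)
    (n : ℕ) (hAe : A (lp.single 2 n 1) = ((Nat.factorial (n + 1) : ℂ))⁻¹ • lp.single 2 n 1) :
    anorm A (lp.single 2 n 1) = Real.sqrt ((Nat.factorial (n + 1) : ℝ))⁻¹ := by
  unfold anorm
  congr 1
  rw [reApplyInnerSelf_apply, hAe, inner_smul_left, lp.inner_single_left]
  simp [lp.single_apply, Complex.ofReal_inv]

/-- on `ℓ²`, if `A` is the positive diagonal operator `A e_n = e_n / n!`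
(indexing the canonical basis by `ℕ`, so `e_n` has eigenvalue `1/(n+1)!`) and `T` is the
backward shift, then `T` is not `A`-bounded. -/
theorem stmt1 (A T : lp (fun _ : ℕ => ℂ) 2 →L[ℂ] lp (fun _ : ℕ => ℂ) 2)
    (hA : A.IsPositive)
    (hAe : ∀ n : ℕ, A (lp.single 2 n 1) = ((Nat.factorial (n + 1) : ℂ))⁻¹ • lp.single 2 n 1)
    (hT0 : T (lp.single 2 0 1) = 0)
    (hTe : ∀ n : ℕ, T (lp.single 2 (n + 1) 1) = lp.single 2 n 1) :
    ¬ ABounded A T := by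
  rintro ⟨c, hc, h⟩
  obtain ⟨n, hn⟩ : ∃ n : ℕ, c ^ 2 < (n : ℝ) + 2 := by
    obtain ⟨n, hn⟩ := exists_nat_gt (c ^ 2)
    exact ⟨n, by linarith⟩
  have key := h (lp.single 2 (n + 1) 1)
  rw [hTe n, anorm_single A n (hAe n), anorm_single A (n + 1) (hAe (n + 1))] at key
  have hfac : (0 : ℝ) < (Nat.factorial (n + 1) : ℝ) := by positivity
  have hfac2 : (0 : ℝ) < (Nat.factorial (n + 2) : ℝ) := by positivity
  -- square both sides
  have h1 : ((Nat.factorial (n + 1) : ℝ))⁻¹ ≤ c ^ 2 * ((Nat.factorial (n + 2) : ℝ))⁻¹ := by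
    have := mul_le_mul key key (Real.sqrt_nonneg _) (by positivity)
    rw [Real.mul_self_sqrt (by positivity)] at this
    calc ((Nat.factorial (n + 1) : ℝ))⁻¹ ≤ _ := this
      _ = c ^ 2 * ((Nat.factorial (n + 2) : ℝ))⁻¹ := by
        rw [mul_mul_mul_comm, Real.mul_self_sqrt (by positivity)]; ring
  have hfe : (Nat.factorial (n + 2) : ℝ) = ((n : ℝ) + 2) * (Nat.factorial (n + 1) : ℝ) := by
    rw [Nat.factorial_succ]; push_cast; ring
  rw [hfe, mul_inv] at h1
  have h2 : (n : ℝ) + 2 ≤ c ^ 2 := by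
    have hpos : (0 : ℝ) < (n : ℝ) + 2 := by positivity
    have h3 := mul_le_mul_of_nonneg_left h1 (le_of_lt (mul_pos hpos hfac))
    field_simp at h3
    linarith
  linarith
end

section
/- Let A be a positive operator on H and T, S A-bounded operators with TS = ST. Then r_A(T + S) ≤ r_A(T) + r_A(S) and r_A(TS) ≤ r_A(T) r_A(S), where r_A(X) = lim_n ‖X^n‖_A^{1/n}. -/
set_option maxHeartbeats 1000000
set_option synthInstance.maxHeartbeats 1000000


open ContinuousLinearMap

variable {H : Type*} [NormedAddCommGroup H] [InnerProductSpace ℂ H] [CompleteSpace H]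

section Aux

variable {A X Y T S : H →L[ℂ] H}

lemma anorm_eq_norm_sqrt (hA : A.IsPositive) (x : H) :
    anorm A x = ‖CFC.sqrt A x‖ := by
  have hB : CFC.sqrt A * CFC.sqrt A = A :=
    CFC.sqrt_mul_sqrt_self A ((nonneg_iff_isPositive A).mpr hA)
  have hs : IsSelfAdjoint (CFC.sqrt A) :=
    ((nonneg_iff_isPositive _).mp (CFC.sqrt_nonneg _)).isSelfAdjoint
  have h1 : A x = CFC.sqrt A (CFC.sqrt A x) := by
    conv_lhs => rw [← hB]
    rfl
  have h2 := ContinuousLinearMap.adjoint_inner_left (CFC.sqrt A) (CFC.sqrt A x) x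
  rw [hs.adjoint_eq] at h2
  have key : A.reApplyInnerSelf x = ‖CFC.sqrt A x‖ ^ 2 := by
    rw [reApplyInnerSelf_apply, h1, inner_re_symm, ← h2, inner_self_eq_norm_sq]
  rw [anorm, key, Real.sqrt_sq (norm_nonneg _)]

lemma anorm_nonneg (A : H →L[ℂ] H) (x : H) : 0 ≤ anorm A x := Real.sqrt_nonneg _

lemma anorm_sum_le (hA : A.IsPositive) {ι : Type*} (s : Finset ι) (f : ι → H) :
    anorm A (∑ i ∈ s, f i) ≤ ∑ i ∈ s, anorm A (f i) := by
  simp only [anorm_eq_norm_sqrt hA, map_sum]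
  exact norm_sum_le _ _

lemma anorm_nsmul (hA : A.IsPositive) (n : ℕ) (x : H) :
    anorm A (n • x) = n * anorm A x := by
  simp only [anorm_eq_norm_sqrt hA, map_nsmul]
  rw [← Nat.cast_smul_eq_nsmul ℝ, norm_smul]
  simp

lemma aNorm_nonneg (A X : H →L[ℂ] H) : 0 ≤ aNorm A X :=
  Real.sInf_nonneg fun _ hc => hc.1

lemma aNorm_le {c : ℝ} (hc : 0 ≤ c) (h : ∀ x, anorm A (X x) ≤ c * anorm A x) :
    aNorm A X ≤ c :=
  csInf_le ⟨0, fun _ hb => hb.1⟩ ⟨hc, h⟩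

lemma aNorm_spec (hX : ABounded A X) (x : H) :
    anorm A (X x) ≤ aNorm A X * anorm A x := by
  obtain ⟨c, hc, hb⟩ := hX
  by_cases h0 : anorm A x = 0
  · have h1 := hb x
    rw [h0, mul_zero] at h1
    rw [h0, mul_zero]
    exact h1
  · have hpos : 0 < anorm A x := lt_of_le_of_ne (anorm_nonneg A x) (Ne.symm h0)
    rw [← div_le_iff₀ hpos]
    refine le_csInf ⟨c, hc.le, hb⟩ ?_
    rintro b ⟨_, hbb⟩
    rw [div_le_iff₀ hpos]
    exact hbb x

lemma abounded_pow (hX : ABounded A X) (n : ℕ) : ABounded A (X ^ n) := by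
  induction n with
  | zero => exact ⟨1, one_pos, fun x => by simp [ContinuousLinearMap.one_apply]⟩
  | succ n ih =>
    obtain ⟨c, hc, hb⟩ := ih
    obtain ⟨d, hd, hd'⟩ := hX
    refine ⟨c * d, mul_pos hc hd, fun x => ?_⟩
    have h1 : (X ^ (n + 1)) x = (X ^ n) (X x) := by rw [pow_succ]; rfl
    rw [h1]
    calc anorm A ((X ^ n) (X x)) ≤ c * anorm A (X x) := hb _
      _ ≤ c * (d * anorm A x) := mul_le_mul_of_nonneg_left (hd' x) hc.le
      _ = c * d * anorm A x := by ring

lemma aNorm_mul_le (hX : ABounded A X) (hY : ABounded A Y) :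
    aNorm A (X * Y) ≤ aNorm A X * aNorm A Y := by
  refine aNorm_le (mul_nonneg (aNorm_nonneg A X) (aNorm_nonneg A Y)) fun x => ?_
  calc anorm A ((X * Y) x) = anorm A (X (Y x)) := rfl
    _ ≤ aNorm A X * anorm A (Y x) := aNorm_spec hX _
    _ ≤ aNorm A X * (aNorm A Y * anorm A x) :=
        mul_le_mul_of_nonneg_left (aNorm_spec hY _) (aNorm_nonneg A X)
    _ = aNorm A X * aNorm A Y * anorm A x := by ring

lemma aNorm_one_le : aNorm A 1 ≤ 1 :=
  aNorm_le one_pos.le fun x => by simp [ContinuousLinearMap.one_apply]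

lemma aNorm_pow_mul_le (hX : ABounded A X) (n m : ℕ) :
    aNorm A (X ^ (n * m)) ≤ aNorm A (X ^ n) ^ m := by
  induction m with
  | zero => simpa using aNorm_one_le
  | succ m ih =>
    rw [Nat.mul_succ, pow_add, pow_succ]
    calc aNorm A (X ^ (n * m) * X ^ n)
        ≤ aNorm A (X ^ (n * m)) * aNorm A (X ^ n) :=
          aNorm_mul_le (abounded_pow hX _) (abounded_pow hX _)
      _ ≤ aNorm A (X ^ n) ^ m * aNorm A (X ^ n) :=
          mul_le_mul_of_nonneg_right ih (aNorm_nonneg A _)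

lemma aSpecRad_nonneg (A X : H →L[ℂ] H) : 0 ≤ aSpecRad A X :=
  Real.iInf_nonneg fun _ => Real.rpow_nonneg (aNorm_nonneg A _) _

lemma bddBelow_aux (A X : H →L[ℂ] H) :
    BddBelow (Set.range fun n : ℕ+ => aNorm A (X ^ (n : ℕ)) ^ ((n : ℝ)⁻¹)) := by
  refine ⟨0, ?_⟩
  rintro y ⟨m, rfl⟩
  exact Real.rpow_nonneg (aNorm_nonneg A _) _

lemma pow_bound (hX : ABounded A X) {e : ℝ} (he : 0 < e) :
    ∃ C : ℝ, 1 ≤ C ∧ ∀ k : ℕ, aNorm A (X ^ k) ≤ C * (aSpecRad A X + e) ^ k := by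
  set a := aSpecRad A X + e with ha
  have hr0 := aSpecRad_nonneg A X
  have ha0 : 0 < a := by positivity
  have h1 : aSpecRad A X < a := lt_add_of_pos_right _ he
  rw [aSpecRad] at h1
  obtain ⟨n, hn⟩ := exists_lt_of_ciInf_lt h1
  have hnz : (n : ℕ) ≠ 0 := n.pos.ne'
  have hna : aNorm A (X ^ (n : ℕ)) ≤ a ^ (n : ℕ) := by
    have h2 : (aNorm A (X ^ (n : ℕ)) ^ ((n : ℝ)⁻¹)) ^ (n : ℕ) ≤ a ^ (n : ℕ) :=
      pow_le_pow_left₀ (Real.rpow_nonneg (aNorm_nonneg A _) _) hn.le _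
    rwa [Real.rpow_inv_natCast_pow (aNorm_nonneg A _) hnz] at h2
  set C : ℝ := (∑ j ∈ Finset.range (n : ℕ), aNorm A (X ^ j) / a ^ j) + 1 with hC
  have hsum_nonneg : ∀ j ∈ Finset.range (n : ℕ), 0 ≤ aNorm A (X ^ j) / a ^ j :=
    fun j _ => div_nonneg (aNorm_nonneg A _) (pow_nonneg ha0.le _)
  have hC1 : 1 ≤ C := le_add_of_nonneg_left (Finset.sum_nonneg hsum_nonneg)
  refine ⟨C, hC1, fun k => ?_⟩
  have hmem : k % (n : ℕ) ∈ Finset.range (n : ℕ) := Finset.mem_range.mpr (Nat.mod_lt _ n.pos)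
  have hr : aNorm A (X ^ (k % (n : ℕ))) ≤ C * a ^ (k % (n : ℕ)) := by
    have hle : aNorm A (X ^ (k % (n : ℕ))) / a ^ (k % (n : ℕ)) ≤ C :=
      le_trans (Finset.single_le_sum hsum_nonneg hmem) (by rw [hC]; linarith)
    calc aNorm A (X ^ (k % (n : ℕ)))
        = (aNorm A (X ^ (k % (n : ℕ))) / a ^ (k % (n : ℕ))) * a ^ (k % (n : ℕ)) := by
          field_simp
      _ ≤ C * a ^ (k % (n : ℕ)) :=
          mul_le_mul_of_nonneg_right hle (pow_nonneg ha0.le _)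
  have hdm : (n : ℕ) * (k / (n : ℕ)) + k % (n : ℕ) = k := Nat.div_add_mod k (n : ℕ)
  calc aNorm A (X ^ k)
      = aNorm A (X ^ ((n : ℕ) * (k / (n : ℕ))) * X ^ (k % (n : ℕ))) := by
        rw [← pow_add, hdm]
    _ ≤ aNorm A (X ^ ((n : ℕ) * (k / (n : ℕ)))) * aNorm A (X ^ (k % (n : ℕ))) :=
        aNorm_mul_le (abounded_pow hX _) (abounded_pow hX _)
    _ ≤ (aNorm A (X ^ (n : ℕ))) ^ (k / (n : ℕ)) * (C * a ^ (k % (n : ℕ))) :=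
        mul_le_mul (aNorm_pow_mul_le hX _ _) hr (aNorm_nonneg A _)
          (pow_nonneg (aNorm_nonneg A _) _)
    _ ≤ (a ^ (n : ℕ)) ^ (k / (n : ℕ)) * (C * a ^ (k % (n : ℕ))) := by
        have := pow_le_pow_left₀ (aNorm_nonneg A _) hna (k / (n : ℕ))
        exact mul_le_mul_of_nonneg_right this (by positivity)
    _ = C * (a ^ ((n : ℕ) * (k / (n : ℕ))) * a ^ (k % (n : ℕ))) := by
        rw [← pow_mul]; ring
    _ = C * a ^ k := by rw [← pow_add, hdm]

lemma specRad_le_of_forall_pow {C v : ℝ} (hC : 1 ≤ C) (hv : 0 ≤ v)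
    (h : ∀ N : ℕ+, aNorm A (X ^ (N : ℕ)) ≤ C * v ^ (N : ℕ)) : aSpecRad A X ≤ v := by
  refine le_of_forall_pos_le_add fun ε hε => ?_
  set δ := ε / (v + 1) with hδ
  have hδ0 : 0 < δ := div_pos hε (by linarith)
  obtain ⟨N, hN⟩ := exists_nat_gt ((C - 1) / δ)
  set M : ℕ+ := ⟨N + 1, Nat.succ_pos N⟩ with hM
  have hMN : (M : ℕ) = N + 1 := rfl
  have hCN : C ≤ (1 + δ) ^ (M : ℕ) := by
    have h1 : C - 1 < (N : ℝ) * δ := by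
      rw [div_lt_iff₀ hδ0] at hN; linarith
    have h2 : (1 : ℝ) + ((M : ℕ) : ℝ) * δ ≤ (1 + δ) ^ (M : ℕ) :=
      one_add_mul_le_pow (by linarith) _
    rw [hMN] at h2 ⊢
    push_cast at h2
    nlinarith
  have hM0 : (M : ℕ) ≠ 0 := M.pos.ne'
  have key : aSpecRad A X ≤ aNorm A (X ^ (M : ℕ)) ^ ((M : ℝ)⁻¹) :=
    ciInf_le (bddBelow_aux A X) M
  have step1 : aNorm A (X ^ (M : ℕ)) ^ ((M : ℝ)⁻¹) ≤ (C * v ^ (M : ℕ)) ^ ((M : ℝ)⁻¹) :=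
    Real.rpow_le_rpow (aNorm_nonneg A _) (h M) (by positivity)
  have step2 : (C * v ^ (M : ℕ)) ^ ((M : ℝ)⁻¹) = C ^ ((M : ℝ)⁻¹) * v := by
    rw [Real.mul_rpow (by linarith) (pow_nonneg hv _),
      Real.pow_rpow_inv_natCast hv hM0]
  have step3 : C ^ ((M : ℝ)⁻¹) ≤ 1 + δ := by
    have h3 := Real.rpow_le_rpow (by linarith : (0:ℝ) ≤ C) hCN
      (by positivity : (0:ℝ) ≤ ((M : ℝ))⁻¹)
    rwa [Real.pow_rpow_inv_natCast (by linarith : (0:ℝ) ≤ 1 + δ) hM0] at h3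
  have h4 : aSpecRad A X ≤ (1 + δ) * v := by
    calc aSpecRad A X ≤ C ^ ((M : ℝ)⁻¹) * v := by
          rw [← step2]; exact key.trans step1
      _ ≤ (1 + δ) * v := mul_le_mul_of_nonneg_right step3 hv
  have h5 : δ * v ≤ ε := by
    rw [hδ, div_mul_eq_mul_div, div_le_iff₀ (by linarith : (0:ℝ) < v + 1)]
    nlinarith
  nlinarith

end Aux

/-- for commuting `A`-bounded operators,
`r_A(T + S) ≤ r_A(T) + r_A(S)` and `r_A(TS) ≤ r_A(T) r_A(S)`. -/
theorem stmt4 (A T S : H →L[ℂ] H) (hA : A.IsPositive)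
    (hT : ABounded A T) (hS : ABounded A S) (hc : T * S = S * T) :
    aSpecRad A (T + S) ≤ aSpecRad A T + aSpecRad A S ∧
      aSpecRad A (T * S) ≤ aSpecRad A T * aSpecRad A S := by
  have hc' : Commute T S := hc
  have hrT := aSpecRad_nonneg A T
  have hrS := aSpecRad_nonneg A S
  constructor
  · refine le_of_forall_pos_le_add fun ε hε => ?_
    have he : 0 < ε / 2 := by linarith
    obtain ⟨C₁, hC₁, hT'⟩ := pow_bound hT he
    obtain ⟨C₂, hC₂, hS'⟩ := pow_bound hS he
    set a := aSpecRad A T + ε / 2 with hha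
    set b := aSpecRad A S + ε / 2 with hhb
    have ha0 : 0 ≤ a := by positivity
    have hb0 : 0 ≤ b := by positivity
    have hsum : ∀ N : ℕ+, aNorm A ((T + S) ^ (N : ℕ)) ≤ (C₁ * C₂) * (a + b) ^ (N : ℕ) := by
      intro N
      refine aNorm_le (by positivity) fun x => ?_
      rw [hc'.add_pow (N : ℕ), ContinuousLinearMap.sum_apply]
      refine le_trans (anorm_sum_le hA _ _) ?_
      have hterm : ∀ m ∈ Finset.range ((N : ℕ) + 1),
          anorm A ((T ^ m * S ^ ((N : ℕ) - m) * (((N : ℕ).choose m : ℕ) : H →L[ℂ] H)) x)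
            ≤ (C₁ * a ^ m) * (C₂ * b ^ ((N : ℕ) - m)) * (((N : ℕ).choose m : ℝ) * anorm A x) := by
        intro m _
        have happ : (T ^ m * S ^ ((N : ℕ) - m) * (((N : ℕ).choose m : ℕ) : H →L[ℂ] H)) x
            = (T ^ m) ((S ^ ((N : ℕ) - m)) (((N : ℕ).choose m) • x)) := by
          rw [ContinuousLinearMap.mul_apply, ContinuousLinearMap.mul_apply,
            ContinuousLinearMap.natCast_apply]
        rw [happ]
        have h1 : anorm A ((T ^ m) ((S ^ ((N : ℕ) - m)) (((N : ℕ).choose m) • x)))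
            ≤ aNorm A (T ^ m) * (aNorm A (S ^ ((N : ℕ) - m)) *
              anorm A (((N : ℕ).choose m) • x)) :=
          le_trans (aNorm_spec (abounded_pow hT m) _)
            (mul_le_mul_of_nonneg_left (aNorm_spec (abounded_pow hS _) _) (aNorm_nonneg A _))
        rw [anorm_nsmul hA] at h1
        refine le_trans h1 ?_
        have hq1 : 0 ≤ aNorm A (T ^ m) := aNorm_nonneg A _
        have hq2 : 0 ≤ aNorm A (S ^ ((N : ℕ) - m)) := aNorm_nonneg A _
        have hb1 := hT' m
        have hb2 := hS' ((N : ℕ) - m)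
        have hx0 : 0 ≤ anorm A x := anorm_nonneg A x
        have hc0 : (0:ℝ) ≤ ((N : ℕ).choose m : ℝ) := Nat.cast_nonneg _
        calc aNorm A (T ^ m) * (aNorm A (S ^ ((N : ℕ) - m)) * (((N : ℕ).choose m : ℝ) * anorm A x))
            ≤ (C₁ * a ^ m) * (aNorm A (S ^ ((N : ℕ) - m)) * (((N : ℕ).choose m : ℝ) * anorm A x)) := by
              refine mul_le_mul_of_nonneg_right hb1 ?_
              positivity
          _ ≤ (C₁ * a ^ m) * ((C₂ * b ^ ((N : ℕ) - m)) * (((N : ℕ).choose m : ℝ) * anorm A x)) := by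
              have : (0:ℝ) ≤ C₁ * a ^ m := by positivity
              refine mul_le_mul_of_nonneg_left ?_ this
              exact mul_le_mul_of_nonneg_right hb2 (by positivity)
          _ = (C₁ * a ^ m) * (C₂ * b ^ ((N : ℕ) - m)) * (((N : ℕ).choose m : ℝ) * anorm A x) := by
              ring
      refine le_trans (Finset.sum_le_sum hterm) ?_
      have hfin : ∑ m ∈ Finset.range ((N : ℕ) + 1),
          (C₁ * a ^ m) * (C₂ * b ^ ((N : ℕ) - m)) * (((N : ℕ).choose m : ℝ) * anorm A x)
          = (C₁ * C₂) * (a + b) ^ (N : ℕ) * anorm A x := by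
        rw [add_pow]
        rw [Finset.mul_sum, Finset.sum_mul]
        refine Finset.sum_congr rfl fun m _ => ?_
        ring
      rw [hfin]
    have hmain := specRad_le_of_forall_pow (by nlinarith : (1:ℝ) ≤ C₁ * C₂)
      (by positivity) hsum
    calc aSpecRad A (T + S) ≤ a + b := hmain
      _ = aSpecRad A T + aSpecRad A S + ε := by rw [hha, hhb]; ring
  · refine le_of_forall_pos_le_add fun ε hε => ?_
    set D := aSpecRad A T + aSpecRad A S + 1 with hD
    have hD0 : 0 < D := by positivity
    set e := min 1 (ε / D) with hee
    have he : 0 < e := lt_min one_pos (div_pos hε hD0)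
    have he1 : e ≤ 1 := min_le_left _ _
    have he2 : e * D ≤ ε := by
      have := min_le_right 1 (ε / D)
      calc e * D ≤ (ε / D) * D := mul_le_mul_of_nonneg_right this hD0.le
        _ = ε := by field_simp
    obtain ⟨C₁, hC₁, hT'⟩ := pow_bound hT he
    obtain ⟨C₂, hC₂, hS'⟩ := pow_bound hS he
    set a := aSpecRad A T + e with hha
    set b := aSpecRad A S + e with hhb
    have ha0 : 0 ≤ a := by positivity
    have hb0 : 0 ≤ b := by positivity
    have hprod : ∀ N : ℕ+, aNorm A ((T * S) ^ (N : ℕ)) ≤ (C₁ * C₂) * (a * b) ^ (N : ℕ) := by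
      intro N
      rw [hc'.mul_pow]
      calc aNorm A (T ^ (N : ℕ) * S ^ (N : ℕ))
          ≤ aNorm A (T ^ (N : ℕ)) * aNorm A (S ^ (N : ℕ)) :=
            aNorm_mul_le (abounded_pow hT _) (abounded_pow hS _)
        _ ≤ (C₁ * a ^ (N : ℕ)) * (C₂ * b ^ (N : ℕ)) :=
            mul_le_mul (hT' _) (hS' _) (aNorm_nonneg A _) (by positivity)
        _ = (C₁ * C₂) * (a * b) ^ (N : ℕ) := by rw [mul_pow]; ring
    have hmain := specRad_le_of_forall_pow (by nlinarith : (1:ℝ) ≤ C₁ * C₂)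
      (by positivity) hprod
    have hab : a * b ≤ aSpecRad A T * aSpecRad A S + ε := by
      have : a * b = aSpecRad A T * aSpecRad A S + e * (aSpecRad A T + aSpecRad A S + e) := by
        rw [hha, hhb]; ring
      nlinarith
    exact hmain.trans hab
end

section
/- Let A be a positive operator on H and T, S A-bounded operators. Then r_A(T + S) ≤ ½(ω_A(T) + ω_A(S) + √((ω_A(T) − ω_A(S))² + 4 min{‖TS‖_A, ‖ST‖_A})). -/
open ContinuousLinearMap

variable {H : Type*} [NormedAddCommGroup H] [InnerProductSpace ℂ H] [CompleteSpace H]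

section Abstract

variable {E F : Type*} [NormedAddCommGroup E] [InnerProductSpace ℂ E] [CompleteSpace E]
  [NormedAddCommGroup F] [InnerProductSpace ℂ F] [CompleteSpace F]

lemma isUnit_algebraMap_sub_of_numRad (M : E →L[ℂ] E) (ρ : ℝ)
    (h : ∀ v : E, ‖(inner ℂ (M v) v : ℂ)‖ ≤ ρ * ‖v‖ ^ 2) (lam : ℂ) (hlam : ρ < ‖lam‖) :
    IsUnit (algebraMap ℂ (E →L[ℂ] E) lam - M) := by
  have hc : (0:ℝ) < ‖lam‖ - ρ := by linarith
  apply ContinuousLinearMap.isUnit_of_forall_le_norm_inner_map _ (c := (‖lam‖ - ρ).toNNReal)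
    (by simpa using hc)
  intro x
  have h1 : (algebraMap ℂ (E →L[ℂ] E) lam - M) x = lam • x - M x := by
    simp [Algebra.algebraMap_eq_smul_one]
  rw [h1, inner_sub_left, inner_smul_left]
  have h2 : ‖(starRingEnd ℂ) lam * (inner ℂ x x : ℂ)‖ = ‖lam‖ * ‖x‖ ^ 2 := by
    rw [norm_mul, RCLike.norm_conj, inner_self_eq_norm_sq_to_K]
    norm_num
  have h3 := norm_sub_norm_le ((starRingEnd ℂ) lam * (inner ℂ x x : ℂ)) (inner ℂ (M x) x : ℂ)
  have h4 := h x
  have h5 : ((‖lam‖ - ρ).toNNReal : ℝ) = ‖lam‖ - ρ := Real.coe_toNNReal _ hc.le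
  calc ‖x‖ ^ 2 * ((‖lam‖ - ρ).toNNReal : ℝ) = (‖lam‖ - ρ) * ‖x‖ ^ 2 := by rw [h5]; ring
    _ ≤ ‖lam‖ * ‖x‖ ^ 2 - ‖(inner ℂ (M x) x : ℂ)‖ := by nlinarith
    _ ≤ ‖(starRingEnd ℂ) lam * (inner ℂ x x : ℂ) - (inner ℂ (M x) x : ℂ)‖ := by
        rw [← h2]; exact h3

lemma spectralRadius_le_of_numRad (M : E →L[ℂ] E) (ρ : ℝ) (hρ : 0 ≤ ρ)
    (h : ∀ v : E, ‖(inner ℂ (M v) v : ℂ)‖ ≤ ρ * ‖v‖ ^ 2) :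
    spectralRadius ℂ M ≤ ENNReal.ofReal ρ := by
  rw [spectralRadius]
  refine iSup₂_le fun lam hlam => ?_
  by_contra hcon
  push_neg at hcon
  have hlt : ρ < ‖lam‖ := by
    rw [← enorm_eq_nnnorm, ← ofReal_norm] at hcon
    exact (ENNReal.ofReal_lt_ofReal_iff_of_nonneg hρ).mp hcon
  exact (spectrum.notMem_iff.mpr (isUnit_algebraMap_sub_of_numRad M ρ h lam hlt)) hlam

lemma isUnit_swap_comp (X : E →L[ℂ] F) (Y : F →L[ℂ] E) (lam : ℂ) (hlam : lam ≠ 0)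
    (h : IsUnit (algebraMap ℂ (F →L[ℂ] F) lam - X.comp Y)) :
    IsUnit (algebraMap ℂ (E →L[ℂ] E) lam - Y.comp X) := by
  obtain ⟨U, hU⟩ := h
  set Ui : F →L[ℂ] F := ((U⁻¹ : (F →L[ℂ] F)ˣ) : F →L[ℂ] F) with hUi
  have happF : ∀ z : F, (algebraMap ℂ (F →L[ℂ] F) lam - X.comp Y) z = lam • z - X (Y z) := by
    intro z; simp [Algebra.algebraMap_eq_smul_one]
  have happE : ∀ z : E, (algebraMap ℂ (E →L[ℂ] E) lam - Y.comp X) z = lam • z - Y (X z) := by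
    intro z; simp [Algebra.algebraMap_eq_smul_one]
  have hUV : ∀ w : F, lam • Ui w - X (Y (Ui w)) = w := by
    intro w
    have h0 := congrArg (fun f : F →L[ℂ] F => f w) U.mul_inv
    simp only [ContinuousLinearMap.mul_apply, ContinuousLinearMap.one_apply] at h0
    rw [hU] at h0
    rw [← happF (Ui w)]
    exact h0
  have hVU : ∀ w : F, Ui (lam • w - X (Y w)) = w := by
    intro w
    have h0 := congrArg (fun f : F →L[ℂ] F => f w) U.inv_mul
    simp only [ContinuousLinearMap.mul_apply, ContinuousLinearMap.one_apply] at h0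
    rw [hU] at h0
    rw [← happF w]
    exact h0
  set V : E →L[ℂ] E := lam⁻¹ • (1 + Y.comp (Ui.comp X)) with hV
  have hVapp : ∀ v : E, V v = lam⁻¹ • (v + Y (Ui (X v))) := by
    intro v
    simp [hV, ContinuousLinearMap.smul_apply, ContinuousLinearMap.add_apply]
  have h1 : (algebraMap ℂ (E →L[ℂ] E) lam - Y.comp X) * V = 1 := by
    ext v
    rw [ContinuousLinearMap.mul_apply, ContinuousLinearMap.one_apply, hVapp, map_smul, happE]
    have e2 := sub_eq_iff_eq_add'.mp (hUV (X v))
    have e1 : X (v + Y (Ui (X v))) = lam • Ui (X v) := by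
      rw [map_add, e2]; abel
    rw [e1, map_smul, smul_add, add_sub_cancel_right, smul_smul, inv_mul_cancel₀ hlam, one_smul]
  have h2 : V * (algebraMap ℂ (E →L[ℂ] E) lam - Y.comp X) = 1 := by
    ext v
    rw [ContinuousLinearMap.mul_apply, ContinuousLinearMap.one_apply, happE, hVapp]
    have e1 : X (lam • v - Y (X v)) = lam • X v - X (Y (X v)) := by
      rw [map_sub, map_smul]
    rw [e1, hVU (X v), sub_add_cancel, smul_smul, inv_mul_cancel₀ hlam, one_smul]
  exact ⟨⟨_, V, h1, h2⟩, rfl⟩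
lemma scalar_ineq (a b c α β : ℝ) (ha : 0 ≤ a) (hb : 0 ≤ b) (hc : 0 ≤ c)
    (hα : 0 ≤ α) (hβ : 0 ≤ β) :
    a*α^2 + b*β^2 + c*(α*β) ≤ (a + b + Real.sqrt ((a-b)^2 + c^2))/2 * (α^2+β^2) := by
  set s := Real.sqrt ((a-b)^2 + c^2) with hs
  have hs0 : 0 ≤ s := Real.sqrt_nonneg _
  have hs2 : s^2 = (a-b)^2 + c^2 := Real.sq_sqrt (by positivity)
  have h2 : (0:ℝ) ≤ s*(α^2+β^2) := by positivity
  have h1 : ((a-b)*(α^2-β^2) + 2*c*α*β)^2 ≤ (s*(α^2+β^2))^2 := by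
    have hexp : (s*(α^2+β^2))^2 = ((a-b)^2+c^2)*(α^2+β^2)^2 := by
      rw [mul_pow, hs2]
    rw [hexp]
    nlinarith [sq_nonneg (c*(α^2-β^2) - 2*(a-b)*α*β)]
  have key : ((a-b)*(α^2-β^2) + 2*c*α*β) ≤ s*(α^2+β^2) := by
    calc (a-b)*(α^2-β^2) + 2*c*α*β ≤ |(a-b)*(α^2-β^2) + 2*c*α*β| := le_abs_self _
      _ = Real.sqrt (((a-b)*(α^2-β^2) + 2*c*α*β)^2) := (Real.sqrt_sq_eq_abs _).symm
      _ ≤ Real.sqrt ((s*(α^2+β^2))^2) := Real.sqrt_le_sqrt h1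
      _ = |s*(α^2+β^2)| := Real.sqrt_sq_eq_abs _
      _ = s*(α^2+β^2) := abs_of_nonneg h2
  nlinarith [key]

set_option maxHeartbeats 1000000 in
lemma spectralRadius_add_le (P Q : E →L[ℂ] E) (a b m t : ℝ) (ha : 0 ≤ a) (hb : 0 ≤ b)
    (hm : 0 ≤ m) (ht : 0 < t)
    (hP : ∀ v : E, ‖(inner ℂ (P v) v : ℂ)‖ ≤ a * ‖v‖ ^ 2)
    (hQ : ∀ v : E, ‖(inner ℂ (Q v) v : ℂ)‖ ≤ b * ‖v‖ ^ 2)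
    (hPQ : ∀ v : E, ‖P (Q v)‖ ≤ m * ‖v‖) :
    spectralRadius ℂ (P + Q) ≤
      ENNReal.ofReal ((a + b + Real.sqrt ((a-b)^2 + (t + m/t)^2))/2) := by
  classical
  set ρ : ℝ := (a + b + Real.sqrt ((a-b)^2 + (t + m/t)^2))/2 with hρdef
  have hρ0 : 0 ≤ ρ := by
    have := Real.sqrt_nonneg ((a-b)^2 + (t + m/t)^2)
    rw [hρdef]; linarith
  have htC : ((t:ℂ)) ≠ 0 := by exact_mod_cast ht.ne'
  set eqv := (WithLp.prodContinuousLinearEquiv 2 ℂ E E) with heqv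
  set X : E →L[ℂ] WithLp 2 (E × E) :=
    ((eqv.symm : E × E →L[ℂ] WithLp 2 (E × E))).comp
      (P.prod ((t:ℂ) • ContinuousLinearMap.id ℂ E)) with hX
  set Y : WithLp 2 (E × E) →L[ℂ] E :=
    ((ContinuousLinearMap.id ℂ E).coprod ((t:ℂ)⁻¹ • Q)).comp
      (eqv : WithLp 2 (E × E) →L[ℂ] E × E) with hY
  have hYX : Y.comp X = P + Q := by
    ext v
    simp only [hX, hY, ContinuousLinearMap.comp_apply, ContinuousLinearMap.prod_apply,
      ContinuousLinearMap.coprod_apply, ContinuousLinearMap.smul_apply,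
      ContinuousLinearMap.coe_id', id_eq, ContinuousLinearMap.add_apply,
      ContinuousLinearEquiv.coe_coe, heqv, ContinuousLinearEquiv.apply_symm_apply,
      WithLp.prodContinuousLinearEquiv_apply, WithLp.prodContinuousLinearEquiv_symm_apply, WithLp.ofLp_fst, WithLp.ofLp_snd,
      WithLp.toLp_fst, WithLp.toLp_snd, ContinuousLinearMap.id_apply]
    rw [map_smul, smul_smul, inv_mul_cancel₀ htC, one_smul]
  have hM : ∀ z : WithLp 2 (E × E),
      ‖(inner ℂ ((X.comp Y) z) z : ℂ)‖ ≤ ρ * ‖z‖ ^ 2 := by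
    intro z
    set u := z.fst with hu
    set w := z.snd with hw
    set y0 : E := u + (t:ℂ)⁻¹ • Q w with hy0
    have hYz : Y z = y0 := by
      simp only [hY, ContinuousLinearMap.comp_apply, ContinuousLinearMap.coprod_apply,
        ContinuousLinearMap.smul_apply, ContinuousLinearEquiv.coe_coe, heqv,
        WithLp.prodContinuousLinearEquiv_apply, WithLp.ofLp_fst, WithLp.ofLp_snd,
        ContinuousLinearMap.id_apply, hy0, hu, hw]
    have hfst : ((X.comp Y) z).fst = P y0 := by
      rw [ContinuousLinearMap.comp_apply, hYz, hX]
      simp only [ContinuousLinearMap.comp_apply, ContinuousLinearMap.prod_apply,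
        ContinuousLinearMap.smul_apply, ContinuousLinearEquiv.coe_coe, heqv,
        WithLp.prodContinuousLinearEquiv_symm_apply, WithLp.toLp_fst,
        ContinuousLinearMap.id_apply]
    have hsnd : ((X.comp Y) z).snd = (t:ℂ) • y0 := by
      rw [ContinuousLinearMap.comp_apply, hYz, hX]
      simp only [ContinuousLinearMap.comp_apply, ContinuousLinearMap.prod_apply,
        ContinuousLinearMap.smul_apply, ContinuousLinearEquiv.coe_coe, heqv,
        WithLp.prodContinuousLinearEquiv_symm_apply, WithLp.toLp_snd,
        ContinuousLinearMap.id_apply]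
    have hinner : (inner ℂ ((X.comp Y) z) z : ℂ) =
        inner ℂ (P u) u + (t:ℂ)⁻¹ * inner ℂ (P (Q w)) u
          + (t:ℂ) * inner ℂ u w + inner ℂ (Q w) w := by
      rw [WithLp.prod_inner_apply]
      simp only [WithLp.ofLp_fst, WithLp.ofLp_snd]
      rw [hfst, hsnd, hy0]
      rw [map_add, map_smul, inner_add_left, inner_smul_left, smul_add, smul_smul,
        mul_inv_cancel₀ htC, one_smul, inner_add_left, inner_smul_left]
      have c1 : (starRingEnd ℂ) ((t:ℂ)⁻¹) = (t:ℂ)⁻¹ := by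
        rw [map_inv₀, Complex.conj_ofReal]
      have c2 : (starRingEnd ℂ) ((t:ℂ)) = (t:ℂ) := Complex.conj_ofReal t
      rw [c1, c2]
      ring
    have hb1 : ‖(inner ℂ (P u) u : ℂ)‖ ≤ a * ‖u‖^2 := hP u
    have hb2 : ‖((t:ℂ)⁻¹ * inner ℂ (P (Q w)) u : ℂ)‖ ≤ t⁻¹ * (m * ‖w‖ * ‖u‖) := by
      rw [norm_mul]
      have : ‖((t:ℂ)⁻¹)‖ = t⁻¹ := by
        rw [norm_inv, Complex.norm_real, Real.norm_of_nonneg ht.le]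
      rw [this]
      have h3 : ‖(inner ℂ (P (Q w)) u : ℂ)‖ ≤ m * ‖w‖ * ‖u‖ := by
        calc ‖(inner ℂ (P (Q w)) u : ℂ)‖ ≤ ‖P (Q w)‖ * ‖u‖ := norm_inner_le_norm _ _
          _ ≤ m * ‖w‖ * ‖u‖ := by
              have := hPQ w
              have hu0 : (0:ℝ) ≤ ‖u‖ := norm_nonneg _
              nlinarith
      have ht0 : (0:ℝ) ≤ t⁻¹ := by positivity
      nlinarith
    have hb3 : ‖((t:ℂ) * inner ℂ u w : ℂ)‖ ≤ t * (‖u‖ * ‖w‖) := by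
      rw [norm_mul]
      have : ‖((t:ℂ))‖ = t := by rw [Complex.norm_real, Real.norm_of_nonneg ht.le]
      rw [this]
      have := norm_inner_le_norm (𝕜 := ℂ) u w
      nlinarith [ht.le]
    have hb4 : ‖(inner ℂ (Q w) w : ℂ)‖ ≤ b * ‖w‖^2 := hQ w
    have htri : ‖(inner ℂ ((X.comp Y) z) z : ℂ)‖ ≤
        a * ‖u‖^2 + b * ‖w‖^2 + (t + m/t) * (‖u‖ * ‖w‖) := by
      rw [hinner]
      calc ‖(inner ℂ (P u) u + (t:ℂ)⁻¹ * inner ℂ (P (Q w)) u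
            + (t:ℂ) * inner ℂ u w + inner ℂ (Q w) w : ℂ)‖
          ≤ ‖(inner ℂ (P u) u + (t:ℂ)⁻¹ * inner ℂ (P (Q w)) u + (t:ℂ) * inner ℂ u w : ℂ)‖
            + ‖(inner ℂ (Q w) w : ℂ)‖ := norm_add_le _ _
        _ ≤ ‖(inner ℂ (P u) u + (t:ℂ)⁻¹ * inner ℂ (P (Q w)) u : ℂ)‖
            + ‖((t:ℂ) * inner ℂ u w : ℂ)‖ + ‖(inner ℂ (Q w) w : ℂ)‖ := by
              have := norm_add_le (inner ℂ (P u) u + (t:ℂ)⁻¹ * inner ℂ (P (Q w)) u : ℂ)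
                ((t:ℂ) * inner ℂ u w)
              linarith
        _ ≤ ‖(inner ℂ (P u) u : ℂ)‖ + ‖((t:ℂ)⁻¹ * inner ℂ (P (Q w)) u : ℂ)‖
            + ‖((t:ℂ) * inner ℂ u w : ℂ)‖ + ‖(inner ℂ (Q w) w : ℂ)‖ := by
              have := norm_add_le (inner ℂ (P u) u : ℂ) ((t:ℂ)⁻¹ * inner ℂ (P (Q w)) u)
              linarith
        _ ≤ a * ‖u‖^2 + b * ‖w‖^2 + (t + m/t) * (‖u‖ * ‖w‖) := by
              have hdiv : t⁻¹ * (m * ‖w‖ * ‖u‖) = (m/t) * (‖u‖ * ‖w‖) := by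
                field_simp
              rw [hdiv] at hb2
              nlinarith [hb1, hb2, hb3, hb4]
    have hnorm : ‖z‖^2 = ‖u‖^2 + ‖w‖^2 := WithLp.prod_norm_sq_eq_of_L2 z
    calc ‖(inner ℂ ((X.comp Y) z) z : ℂ)‖
        ≤ a * ‖u‖^2 + b * ‖w‖^2 + (t + m/t) * (‖u‖ * ‖w‖) := htri
      _ ≤ ρ * (‖u‖^2 + ‖w‖^2) := by
          have := scalar_ineq a b (t + m/t) ‖u‖ ‖w‖ ha hb (by positivity)
            (norm_nonneg _) (norm_nonneg _)
          rw [hρdef]; linarith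
      _ = ρ * ‖z‖^2 := by rw [hnorm]
  -- now conclude
  rw [spectralRadius]
  refine iSup₂_le fun lam hlam => ?_
  by_contra hcon
  push_neg at hcon
  have hlt : ρ < ‖lam‖ := by
    rw [← enorm_eq_nnnorm, ← ofReal_norm] at hcon
    exact (ENNReal.ofReal_lt_ofReal_iff_of_nonneg hρ0).mp hcon
  have hlam0 : lam ≠ 0 := by
    intro h0
    rw [h0, norm_zero] at hlt
    linarith
  have hunit1 := isUnit_algebraMap_sub_of_numRad (X.comp Y) ρ hM lam hlt
  have hunit2 := isUnit_swap_comp X Y lam hlam0 hunit1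
  rw [hYX] at hunit2
  exact (spectrum.notMem_iff.mpr hunit2) hlam

end Abstract

section Ext

/-- closure of the range of `B`. -/
noncomputable def Ksub (B : H →L[ℂ] H) : Submodule ℂ H :=
  (LinearMap.range (B : H →ₗ[ℂ] H)).topologicalClosure

noncomputable def bK (B : H →L[ℂ] H) (x : H) : Ksub B :=
  ⟨B x, Submodule.le_topologicalClosure _ (LinearMap.mem_range_self _ x)⟩

lemma denseRange_bK (B : H →L[ℂ] H) : DenseRange (bK B) := by
  intro v
  rw [closure_subtype]
  have himg : (Subtype.val '' Set.range (bK B)) = (LinearMap.range (B : H →ₗ[ℂ] H) : Set H) := by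
    ext y
    simp only [Set.mem_image, Set.mem_range, SetLike.mem_coe, LinearMap.mem_range]
    constructor
    · rintro ⟨k, ⟨x, rfl⟩, rfl⟩; exact ⟨x, rfl⟩
    · rintro ⟨x, rfl⟩; exact ⟨bK B x, ⟨x, rfl⟩, rfl⟩
  rw [himg]
  have hv : (v : H) ∈ (LinearMap.range (B : H →ₗ[ℂ] H)).topologicalClosure := v.2
  rw [← Submodule.topologicalClosure_coe]
  exact hv

lemma bK_dense_closed {B : H →L[ℂ] H} {p : Ksub B → Prop} (hp : IsClosed {v | p v})
    (h : ∀ x, p (bK B x)) (v : Ksub B) : p v := by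
  have h1 : Set.range (bK B) ⊆ {v | p v} := by rintro _ ⟨x, rfl⟩; exact h x
  have h2 : closure (Set.range (bK B)) ⊆ {v | p v} := closure_minimal h1 hp
  exact h2 ((denseRange_bK B) v)

lemma exists_ext (B X : H →L[ℂ] H) (c : ℝ) (h : ∀ x, ‖B (X x)‖ ≤ c * ‖B x‖) :
    ∃ W : Ksub B →L[ℂ] Ksub B, ∀ x, W (bK B x) = bK B (X x) := by
  classical
  set R : Submodule ℂ H := LinearMap.range (B : H →ₗ[ℂ] H) with hR
  have hRK : R ≤ Ksub B := Submodule.le_topologicalClosure _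
  -- the corestricted map `x ↦ B (X x) ∈ Ksub B`
  set f : H →ₗ[ℂ] Ksub B :=
    LinearMap.codRestrict (Ksub B) ((B.comp X : H →L[ℂ] H) : H →ₗ[ℂ] H)
      (fun x => hRK (LinearMap.mem_range_self _ (X x))) with hf
  have hfcoe : ∀ x, (f x : H) = B (X x) := fun x => rfl
  have hker : LinearMap.ker (B : H →ₗ[ℂ] H) ≤ LinearMap.ker f := by
    intro x hx
    have hBx : B x = 0 := hx
    have : ‖B (X x)‖ ≤ 0 := by simpa [hBx] using h x
    have : B (X x) = 0 := by
      have := le_antisymm this (norm_nonneg _)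
      simpa using this
    exact Subtype.ext (by simpa [hfcoe] using this)
  set e := LinearMap.quotKerEquivRange (B : H →ₗ[ℂ] H) with he
  set W₀ : R →ₗ[ℂ] Ksub B :=
    (Submodule.liftQ (LinearMap.ker (B : H →ₗ[ℂ] H)) f hker).comp e.symm.toLinearMap with hW₀
  have key : ∀ x : H, W₀ (e (Submodule.Quotient.mk x)) = f x := by
    intro x
    simp [hW₀, Submodule.liftQ_apply]
  have repr : ∀ u : R, ∃ x : H, u = e (Submodule.Quotient.mk x) ∧ (u : H) = B x := by
    rintro ⟨_, ⟨x, rfl⟩⟩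
    refine ⟨x, ?_, rfl⟩
    apply Subtype.ext
    rw [LinearMap.quotKerEquivRange_apply_mk]
  have hbound : ∀ u : R, ‖W₀ u‖ ≤ c * ‖u‖ := by
    intro u
    obtain ⟨x, hu, hux⟩ := repr u
    rw [hu, key]
    have h1 : ‖f x‖ = ‖B (X x)‖ := rfl
    have h2 : ‖u‖ = ‖B x‖ := by rw [← hux]; rfl
    rw [h1, ← hu, h2]
    exact h x
  set W₁ : R →L[ℂ] Ksub B := LinearMap.mkContinuous W₀ c hbound with hW₁
  -- inclusion of R into its closure, as a CLM
  set eI : R →L[ℂ] Ksub B :=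
    LinearMap.mkContinuous (Submodule.inclusion hRK) 1
      (fun u => by rw [one_mul]; rfl) with heI
  have heIcoe : ∀ u : R, (eI u : H) = (u : H) := fun u => rfl
  have hiso : Isometry eI := AddMonoidHomClass.isometry_of_norm eI (fun u => rfl)
  have hdense : DenseRange eI := by
    have hsub : Set.range (bK B) ⊆ Set.range eI := by
      rintro _ ⟨x, rfl⟩
      exact ⟨⟨B x, LinearMap.mem_range_self _ x⟩, Subtype.ext rfl⟩
    exact Dense.mono hsub (denseRange_bK B)
  haveI : CompleteSpace (Ksub B) :=
    (Submodule.isClosed_topologicalClosure _).completeSpace_coe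
  refine ⟨W₁.extend eI, fun x => ?_⟩
  have h1 : eI ⟨B x, LinearMap.mem_range_self _ x⟩ = bK B x := Subtype.ext rfl
  rw [← h1, ContinuousLinearMap.extend_eq (h_dense := hdense) (h_e := hiso.isUniformInducing)]
  have h2 : (⟨B x, LinearMap.mem_range_self _ x⟩ : R) = e (Submodule.Quotient.mk x) := by
    apply Subtype.ext
    rw [LinearMap.quotKerEquivRange_apply_mk]
    rfl
  rw [hW₁, LinearMap.mkContinuous_apply, h2, key]
  exact Subtype.ext rfl
lemma pow_bK (B : H →L[ℂ] H) (W : Ksub B →L[ℂ] Ksub B) (X : H →L[ℂ] H)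
    (h : ∀ x, W (bK B x) = bK B (X x)) :
    ∀ (n : ℕ) (x : H), (W ^ n) (bK B x) = bK B ((X ^ n) x) := by
  intro n
  induction n with
  | zero => intro x; simp [pow_zero, ContinuousLinearMap.one_apply]
  | succ n ih =>
    intro x
    rw [pow_succ, ContinuousLinearMap.mul_apply, h x, ih (X x), pow_succ,
      ContinuousLinearMap.mul_apply]

lemma cross_bound (B : H →L[ℂ] H) (W₁ W₂ : Ksub B →L[ℂ] Ksub B) (X₁ X₂ : H →L[ℂ] H)
    (h1 : ∀ x, W₁ (bK B x) = bK B (X₁ x)) (h2 : ∀ x, W₂ (bK B x) = bK B (X₂ x))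
    (c : ℝ) (hc : ∀ x, ‖B (X₁ (X₂ x))‖ ≤ c * ‖B x‖) :
    ∀ v : Ksub B, ‖W₁ (W₂ v)‖ ≤ c * ‖v‖ := by
  apply bK_dense_closed
  · apply isClosed_le
    · exact (W₁.continuous.comp W₂.continuous).norm
    · exact continuous_const.mul continuous_norm
  · intro x
    rw [h2 x, h1 (X₂ x)]
    have e1 : ‖bK B (X₁ (X₂ x))‖ = ‖B (X₁ (X₂ x))‖ := rfl
    have e2 : ‖bK B x‖ = ‖B x‖ := rfl
    rw [e1, e2]
    exact hc x

lemma numRad_bound (B X : H →L[ℂ] H) (W : Ksub B →L[ℂ] Ksub B)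
    (hsymm : ∀ u v : H, (inner ℂ (B u) v : ℂ) = inner ℂ u (B v))
    (hW : ∀ x, W (bK B x) = bK B (X x)) (a cX : ℝ) (ha : 0 ≤ a)
    (hcX : ∀ x, ‖B (X x)‖ ≤ cX * ‖B x‖)
    (hmem : ∀ x : H, ‖B x‖ = 1 → ‖(inner ℂ (B (B (X x))) x : ℂ)‖ ≤ a) :
    ∀ v : Ksub B, ‖(inner ℂ (W v) v : ℂ)‖ ≤ a * ‖v‖ ^ 2 := by
  apply bK_dense_closed
  · apply isClosed_le
    · exact (Continuous.inner W.continuous continuous_id).norm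
    · exact continuous_const.mul (continuous_norm.pow 2)
  · intro x
    rw [hW x]
    have e0 : (inner ℂ (bK B (X x)) (bK B x) : ℂ) = inner ℂ (B (X x)) (B x) := rfl
    have e1 : (inner ℂ (bK B (X x)) (bK B x) : ℂ) = inner ℂ (B (B (X x))) x := by
      rw [e0, hsymm (B (X x)) x]
    have e2 : ‖bK B x‖ = ‖B x‖ := rfl
    rw [e1, e2]
    rcases eq_or_lt_of_le (norm_nonneg (B x)) with hz | hz
    · -- ‖B x‖ = 0
      have hBx : B x = 0 := by
        have := hz.symm
        rwa [norm_eq_zero] at this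
      have hBXx : B (X x) = 0 := by
        have := hcX x
        rw [hBx, norm_zero, mul_zero] at this
        exact norm_le_zero_iff.mp this
      rw [show (inner ℂ (B (B (X x))) x : ℂ) = 0 by rw [hBXx, map_zero]; exact inner_zero_left x]
      simp [← hz]
    · -- ‖B x‖ > 0
      set s : ℝ := ‖B x‖ with hs
      set x' : H := ((s : ℂ))⁻¹ • x with hx'
      have hsC : ((s:ℂ)) ≠ 0 := by
        simp only [ne_eq, Complex.ofReal_eq_zero]
        exact hz.ne'
      have hnx' : ‖B x'‖ = 1 := by
        rw [hx', map_smul, norm_smul, norm_inv, Complex.norm_real, Real.norm_of_nonneg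
          (norm_nonneg _)]
        field_simp
        exact div_self (ne_of_gt hz)
      have hval := hmem x' hnx'
      have hexp : (inner ℂ (B (B (X x'))) x' : ℂ)
          = ((s:ℂ))⁻¹ * (starRingEnd ℂ) (((s:ℂ))⁻¹) * inner ℂ (B (B (X x))) x := by
        rw [hx', map_smul, map_smul, map_smul, inner_smul_left, inner_smul_right]
        ring
      have hnorm_eq : ‖(inner ℂ (B (B (X x'))) x' : ℂ)‖ = s⁻¹ * s⁻¹ * ‖(inner ℂ (B (B (X x))) x : ℂ)‖ := by
        rw [hexp, norm_mul, norm_mul, RCLike.norm_conj, norm_inv, Complex.norm_real,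
          Real.norm_of_nonneg (norm_nonneg _)]
      have hfin : ‖(inner ℂ (B (B (X x))) x : ℂ)‖ = s * s * ‖(inner ℂ (B (B (X x'))) x' : ℂ)‖ := by
        rw [hnorm_eq]
        field_simp
      rw [hfin]
      have hss : (0:ℝ) ≤ s * s := by positivity
      calc s * s * ‖(inner ℂ (B (B (X x'))) x' : ℂ)‖ ≤ s * s * a := by
            exact mul_le_mul_of_nonneg_left hval hss
        _ = a * s ^ 2 := by ring

end Ext


set_option maxHeartbeats 2000000 in
theorem stmt15 (A T S : H →L[ℂ] H) (hA : A.IsPositive)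
    (hT : ABounded A T) (hS : ABounded A S) :
    aSpecRad A (T + S) ≤
      (aNumRad A T + aNumRad A S +
        Real.sqrt ((aNumRad A T - aNumRad A S) ^ 2 +
          4 * min (aNorm A (T * S)) (aNorm A (S * T)))) / 2 := by
  classical
  obtain ⟨cT, hcT0, hcT⟩ := hT
  obtain ⟨cS, hcS0, hcS⟩ := hS
  have hA0 : (0 : H →L[ℂ] H) ≤ A := (ContinuousLinearMap.nonneg_iff_isPositive A).mpr hA
  set B : H →L[ℂ] H := CFC.sqrt A with hBdef
  have hB0 : (0:H →L[ℂ] H) ≤ B := CFC.sqrt_nonneg A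
  have hBsa : IsSelfAdjoint B := IsSelfAdjoint.of_nonneg hB0
  have hBB : B * B = A := by
    have := CFC.sq_sqrt A hA0
    rwa [pow_two] at this
  have hsymm : ∀ u v : H, (inner ℂ (B u) v : ℂ) = inner ℂ u (B v) :=
    (ContinuousLinearMap.isSelfAdjoint_iff_isSymmetric.mp hBsa)
  have hanorm : ∀ x : H, anorm A x = ‖B x‖ := by
    intro x
    have h1 : A x = B (B x) := by rw [← hBB]; rfl
    have h2 : A.reApplyInnerSelf x = ‖B x‖ ^ 2 := by
      rw [ContinuousLinearMap.reApplyInnerSelf_apply]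
      rw [h1, hsymm (B x) x, inner_self_eq_norm_sq_to_K]
      simp [← Complex.ofReal_pow]
    rw [anorm, h2, Real.sqrt_sq (norm_nonneg _)]
  have hAin : ∀ y x : H, (inner ℂ (A y) x : ℂ) = inner ℂ (B (B y)) x := by
    intro y x; rw [← hBB]; rfl
  have hcT' : ∀ x, ‖B (T x)‖ ≤ cT * ‖B x‖ := fun x => by
    rw [← hanorm, ← hanorm]; exact hcT x
  have hcS' : ∀ x, ‖B (S x)‖ ≤ cS * ‖B x‖ := fun x => by
    rw [← hanorm, ← hanorm]; exact hcS x
  haveI : CompleteSpace (Ksub B) := (Submodule.isClosed_topologicalClosure _).completeSpace_coe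
  obtain ⟨WT, hWT⟩ := exists_ext B T cT hcT'
  obtain ⟨WS, hWS⟩ := exists_ext B S cS hcS'
  set a := aNumRad A T with hadef
  set b := aNumRad A S with hbdef2
  set m₁ := aNorm A (T*S) with hm1def
  set m₂ := aNorm A (S*T) with hm2def
  have ha0 : 0 ≤ a := by
    rw [hadef, aNumRad]
    apply Real.sSup_nonneg
    rintro c ⟨x, hx, rfl⟩
    exact norm_nonneg _
  have hb0 : 0 ≤ b := by
    rw [hbdef2, aNumRad]
    apply Real.sSup_nonneg
    rintro c ⟨x, hx, rfl⟩
    exact norm_nonneg _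
  have hN0 : ∀ R : H →L[ℂ] H, 0 ≤ aNorm A R := by
    intro R
    rw [aNorm]
    apply Real.sInf_nonneg
    rintro c ⟨hc0, -⟩
    exact hc0
  have hm₁0 : 0 ≤ m₁ := hN0 _
  have hm₂0 : 0 ≤ m₂ := hN0 _
  -- membership bounds for the numerical radius
  have hbddgen : ∀ (X : H →L[ℂ] H) (cX : ℝ), (∀ x, ‖B (X x)‖ ≤ cX * ‖B x‖) →
      BddAbove {c : ℝ | ∃ x, anorm A x = 1 ∧ c = ‖(inner ℂ (A (X x)) x : ℂ)‖} := by
    intro X cX hcX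
    refine ⟨cX, ?_⟩
    rintro c ⟨x, hx1, rfl⟩
    rw [hanorm] at hx1
    have h1 : (inner ℂ (A (X x)) x : ℂ) = inner ℂ (B (X x)) (B x) := by
      rw [hAin, hsymm]
    rw [h1]
    calc ‖(inner ℂ (B (X x)) (B x) : ℂ)‖ ≤ ‖B (X x)‖ * ‖B x‖ := norm_inner_le_norm _ _
      _ ≤ (cX * ‖B x‖) * ‖B x‖ := by
          apply mul_le_mul_of_nonneg_right (hcX x) (norm_nonneg _)
      _ = cX := by rw [hx1]; ring
  have hmemgen : ∀ (X : H →L[ℂ] H) (cX : ℝ), (∀ x, ‖B (X x)‖ ≤ cX * ‖B x‖) →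
      ∀ x : H, ‖B x‖ = 1 → ‖(inner ℂ (B (B (X x))) x : ℂ)‖ ≤ aNumRad A X := by
    intro X cX hcX x hx
    have hmem : ‖(inner ℂ (A (X x)) x : ℂ)‖ ∈
        {c : ℝ | ∃ x, anorm A x = 1 ∧ c = ‖(inner ℂ (A (X x)) x : ℂ)‖} :=
      ⟨x, by rw [hanorm]; exact hx, rfl⟩
    have h2 := le_csSup (hbddgen X cX hcX) hmem
    rw [hAin] at h2
    exact h2
  have hPnum : ∀ v : Ksub B, ‖(inner ℂ (WT v) v : ℂ)‖ ≤ a * ‖v‖ ^ 2 :=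
    numRad_bound B T WT hsymm hWT a cT ha0 hcT' (hmemgen T cT hcT')
  have hQnum : ∀ v : Ksub B, ‖(inner ℂ (WS v) v : ℂ)‖ ≤ b * ‖v‖ ^ 2 :=
    numRad_bound B S WS hsymm hWS b cS hb0 hcS' (hmemgen S cS hcS')
  -- cross bounds
  have hcross : ∀ (X₁ X₂ : H →L[ℂ] H) (W₁ W₂ : Ksub B →L[ℂ] Ksub B),
      (∀ x, W₁ (bK B x) = bK B (X₁ x)) → (∀ x, W₂ (bK B x) = bK B (X₂ x)) →
      {c : ℝ | 0 ≤ c ∧ ∀ x : H, anorm A ((X₁ * X₂) x) ≤ c * anorm A x}.Nonempty →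
      ∀ v : Ksub B, ‖W₁ (W₂ v)‖ ≤ aNorm A (X₁ * X₂) * ‖v‖ := by
    intro X₁ X₂ W₁ W₂ h1 h2 hne v
    rcases eq_or_ne v 0 with rfl | hv
    · simp
    · have hvn : 0 < ‖v‖ := norm_pos_iff.mpr hv
      have hdiv : ‖W₁ (W₂ v)‖ / ‖v‖ ≤ aNorm A (X₁ * X₂) := by
        rw [aNorm]
        apply le_csInf hne
        rintro c ⟨hc0, hc⟩
        rw [div_le_iff₀ hvn]
        refine cross_bound B W₁ W₂ X₁ X₂ h1 h2 c (fun x => ?_) v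
        have := hc x
        rw [hanorm, hanorm, ContinuousLinearMap.mul_apply] at this
        exact this
      calc ‖W₁ (W₂ v)‖ = ‖W₁ (W₂ v)‖ / ‖v‖ * ‖v‖ := (div_mul_cancel₀ _ hvn.ne').symm
        _ ≤ aNorm A (X₁ * X₂) * ‖v‖ := mul_le_mul_of_nonneg_right hdiv hvn.le
  have hTSne : {c : ℝ | 0 ≤ c ∧ ∀ x : H, anorm A ((T * S) x) ≤ c * anorm A x}.Nonempty := by
    refine ⟨cT * cS, by positivity, fun x => ?_⟩
    rw [ContinuousLinearMap.mul_apply]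
    calc anorm A (T (S x)) ≤ cT * anorm A (S x) := hcT _
      _ ≤ cT * (cS * anorm A x) := mul_le_mul_of_nonneg_left (hcS x) hcT0.le
      _ = (cT * cS) * anorm A x := by ring
  have hSTne : {c : ℝ | 0 ≤ c ∧ ∀ x : H, anorm A ((S * T) x) ≤ c * anorm A x}.Nonempty := by
    refine ⟨cS * cT, by positivity, fun x => ?_⟩
    rw [ContinuousLinearMap.mul_apply]
    calc anorm A (S (T x)) ≤ cS * anorm A (T x) := hcS _
      _ ≤ cS * (cT * anorm A x) := mul_le_mul_of_nonneg_left (hcT x) hcS0.le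
      _ = (cS * cT) * anorm A x := by ring
  have hcross1 : ∀ v : Ksub B, ‖WT (WS v)‖ ≤ m₁ * ‖v‖ :=
    hcross T S WT WS hWT hWS hTSne
  have hcross2 : ∀ v : Ksub B, ‖WS (WT v)‖ ≤ m₂ * ‖v‖ :=
    hcross S T WS WT hWS hWT hSTne
  -- power bound
  have hWadd : ∀ x, (WT + WS) (bK B x) = bK B ((T+S) x) := by
    intro x
    apply Subtype.ext
    have h1 : ((WT + WS) (bK B x) : H) = (WT (bK B x) : H) + (WS (bK B x) : H) := rfl
    rw [h1, hWT x, hWS x]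
    show B (T x) + B (S x) = B ((T + S) x)
    rw [ContinuousLinearMap.add_apply, map_add]
  have hWpow : ∀ n : ℕ, aNorm A ((T+S)^n) ≤ ‖(WT + WS)^n‖ := by
    intro n
    apply csInf_le ⟨0, fun c hc => hc.1⟩
    refine ⟨ContinuousLinearMap.opNorm_nonneg _, fun x => ?_⟩
    have hpow := pow_bK B (WT+WS) (T+S) hWadd n x
    have e1 : anorm A (((T+S)^n) x) = ‖((WT+WS)^n) (bK B x)‖ := by
      rw [hanorm, hpow]
      rfl
    rw [e1, hanorm]
    calc ‖((WT+WS)^n) (bK B x)‖ ≤ ‖(WT+WS)^n‖ * ‖bK B x‖ :=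
          ContinuousLinearMap.le_opNorm _ _
      _ = ‖(WT+WS)^n‖ * ‖B x‖ := rfl
  -- conversion from spectralRadius to aSpecRad
  have hbdd : BddBelow (Set.range fun n : ℕ+ =>
      aNorm A ((T+S) ^ (n:ℕ)) ^ (((n:ℕ):ℝ)⁻¹)) := by
    refine ⟨0, ?_⟩
    rintro _ ⟨n, rfl⟩
    exact Real.rpow_nonneg (hN0 _) _
  have key : ∀ ρ : ℝ, 0 ≤ ρ → spectralRadius ℂ (WT + WS) ≤ ENNReal.ofReal ρ →
      aSpecRad A (T+S) ≤ ρ := by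
    intro ρ hρ0 hspec
    by_contra hcon
    push_neg at hcon
    have h0lt : 0 < aSpecRad A (T+S) := lt_of_le_of_lt hρ0 hcon
    have hlt : spectralRadius ℂ (WT+WS) < ENNReal.ofReal (aSpecRad A (T+S)) :=
      lt_of_le_of_lt hspec ((ENNReal.ofReal_lt_ofReal_iff h0lt).mpr hcon)
    have htend := spectrum.pow_nnnorm_pow_one_div_tendsto_nhds_spectralRadius (WT+WS)
    have hev := htend.eventually_lt_const hlt
    obtain ⟨n, hnlt, hn1⟩ := (hev.and (Filter.eventually_ge_atTop 1)).exists
    have h1 : aSpecRad A (T+S) ≤ aNorm A ((T+S) ^ n) ^ ((n:ℝ)⁻¹) := by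
      have := ciInf_le hbdd (⟨n, hn1⟩ : ℕ+)
      exact this
    have h2 : aNorm A ((T+S)^n) ^ ((n:ℝ)⁻¹) ≤ ‖(WT+WS)^n‖ ^ ((n:ℝ)⁻¹) :=
      Real.rpow_le_rpow (hN0 _) (hWpow n) (by positivity)
    have h3 : ‖(WT+WS)^n‖ ^ ((n:ℝ)⁻¹) < aSpecRad A (T+S) := by
      rw [← enorm_eq_nnnorm, ← ofReal_norm,
        ENNReal.ofReal_rpow_of_nonneg (norm_nonneg _) (by positivity)] at hnlt
      have := (ENNReal.ofReal_lt_ofReal_iff h0lt).mp hnlt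
      rwa [one_div] at this
    exact lt_irrefl _ (lt_of_le_of_lt (le_trans h1 h2) h3)
  -- main estimate for a given cross norm mm
  have main : ∀ mm : ℝ, 0 ≤ mm →
      (∀ t : ℝ, 0 < t → spectralRadius ℂ (WT+WS) ≤
        ENNReal.ofReal ((a + b + Real.sqrt ((a-b)^2 + (t + mm/t)^2))/2)) →
      aSpecRad A (T+S) ≤ (a + b + Real.sqrt ((a-b)^2 + 4*mm))/2 := by
    intro mm hmm0 hbound
    have hρgen : ∀ u : ℝ, (0:ℝ) ≤ (a + b + Real.sqrt ((a-b)^2 + u^2))/2 := by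
      intro u
      have := Real.sqrt_nonneg ((a-b)^2 + u^2)
      linarith
    rcases eq_or_lt_of_le hmm0 with hz | hpos
    · -- mm = 0
      have hmm : mm = 0 := hz.symm
      apply le_of_forall_pos_le_add
      intro ε hε
      have h1 := key _ (hρgen (ε + mm/ε)) (hbound ε hε)
      have hsimp : ε + mm/ε = ε := by rw [hmm]; simp
      rw [hsimp] at h1
      have e1 : Real.sqrt ((a-b)^2 + ε^2) ≤ |a-b| + ε := by
        have hc : (a-b)^2 + ε^2 ≤ (|a-b|+ε)^2 := by
          nlinarith [abs_nonneg (a-b), sq_abs (a-b), hε.le]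
        calc Real.sqrt ((a-b)^2 + ε^2) ≤ Real.sqrt ((|a-b|+ε)^2) := Real.sqrt_le_sqrt hc
          _ = |a-b| + ε := Real.sqrt_sq (by positivity)
      have e2 : Real.sqrt ((a-b)^2 + 4*mm) = |a-b| := by
        rw [hmm]
        norm_num [Real.sqrt_sq_eq_abs]
      rw [e2]
      linarith
    · -- mm > 0
      have hsq : 0 < Real.sqrt mm := Real.sqrt_pos.mpr hpos
      have ht := hbound (Real.sqrt mm) hsq
      have e : Real.sqrt mm + mm / Real.sqrt mm = 2 * Real.sqrt mm := by
        rw [Real.div_sqrt]; ring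
      rw [e] at ht
      have e2 : (2 * Real.sqrt mm)^2 = 4 * mm := by
        rw [mul_pow, Real.sq_sqrt hpos.le]; ring
      rw [e2] at ht
      exact key _ (by
        have := Real.sqrt_nonneg ((a-b)^2 + 4*mm)
        linarith) ht
  rcases le_total m₁ m₂ with hmin | hmin
  · rw [min_eq_left hmin]
    apply main m₁ hm₁0
    intro t ht
    exact spectralRadius_add_le WT WS a b m₁ t ha0 hb0 hm₁0 ht hPnum hQnum hcross1
  · rw [min_eq_right hmin]
    apply main m₂ hm₂0
    intro t ht
    have h := spectralRadius_add_le WS WT b a m₂ t hb0 ha0 hm₂0 ht hQnum hPnum hcross2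
    rw [add_comm WS WT] at h
    have e : (b + a + Real.sqrt ((b-a)^2 + (t + m₂/t)^2))/2
        = (a + b + Real.sqrt ((a-b)^2 + (t + m₂/t)^2))/2 := by
      rw [show (b-a)^2 = (a-b)^2 from by ring]
      ring
    rwa [e] at h
end
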